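/- arXiv:2206.07946 — 2 statements merged into one kernel-verified Lean document; each statement's English description precedes it below -/
import Mathlib

section
/- Let a, b, c ∈ ℝ and define u(ρ, ζ) = log(aρ² + bρ + c) − 2 log(1 + (a/2)|ζ|²) on the open set where aρ² + bρ + c > 0 and 1 + (a/2)|ζ|² > 0. Then u satisfies the continuous Toda equation (∂²_x + ∂²_y) u = −2 ∂²_ρ (e^u), where ζ = x + iy. -/
private lemma auxA (a C e x : ℝ) (hx : 0 < e + a / 2 * x ^ 2) :
    deriv (deriv fun s => C - 2 * Real.log (e + a / 2 * s ^ 2)) x =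
      (-2 * a * (e + a / 2 * x ^ 2) + 2 * a ^ 2 * x ^ 2) / (e + a / 2 * x ^ 2) ^ 2 := by
  set P : ℝ → ℝ := fun s => e + a / 2 * s ^ 2 with hP
  have hPc : Continuous P := by fun_prop
  have hev : ∀ᶠ s in nhds x, 0 < P s :=
    (hPc.continuousAt : Filter.Tendsto P (nhds x) (nhds (P x))).eventually
      (eventually_gt_nhds (by simpa using hx))
  have hPd : ∀ s : ℝ, HasDerivAt P (a * s) s := by
    intro s
    have := ((hasDerivAt_pow 2 s).const_mul (a / 2)).const_add e
    refine this.congr_deriv ?_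
    push_cast; ring
  have hstep : ∀ s : ℝ, 0 < P s →
      HasDerivAt (fun s => C - 2 * Real.log (e + a / 2 * s ^ 2)) (-2 * (a * s) / P s) s := by
    intro s hs
    have hlog : HasDerivAt (fun s => Real.log (P s)) (a * s / P s) s :=
      (hPd s).log (ne_of_gt hs)
    have := (hlog.const_mul 2).const_sub C
    refine this.congr_deriv ?_
    field_simp
  have heq : deriv (fun s => C - 2 * Real.log (e + a / 2 * s ^ 2)) =ᶠ[nhds x]
      fun s => -2 * (a * s) / P s := by
    filter_upwards [hev] with s hs using (hstep s hs).deriv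
  rw [Filter.EventuallyEq.deriv_eq heq]
  have hf : HasDerivAt (fun s : ℝ => -2 * (a * s)) (-2 * a) x := by
    have h := (hasDerivAt_id x).const_mul (-2 * a)
    simp only [id_eq] at h
    convert h using 1
    · rfl
    · rfl
    · funext s; ring
    · ring
  have hdiv := hf.div (hPd x) (ne_of_gt (by simpa using hx))
  rw [(show HasDerivAt (fun s => -2 * (a * s) / P s) _ x from hdiv).deriv]
  have hPx : P x = e + a / 2 * x ^ 2 := rfl
  rw [hPx]
  ring

private lemma auxB (a b c k ρ : ℝ) (hρ : 0 < a * ρ ^ 2 + b * ρ + c) :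
    deriv (deriv fun s => Real.exp (Real.log (a * s ^ 2 + b * s + c) - k)) ρ =
      2 * a * Real.exp (-k) := by
  set Q : ℝ → ℝ := fun s => a * s ^ 2 + b * s + c with hQ
  have hQc : Continuous Q := by fun_prop
  have hev : ∀ᶠ s in nhds ρ, 0 < Q s :=
    (hQc.continuousAt : Filter.Tendsto Q (nhds ρ) (nhds (Q ρ))).eventually
      (eventually_gt_nhds hρ)
  have heq0 : (fun s => Real.exp (Real.log (a * s ^ 2 + b * s + c) - k)) =ᶠ[nhds ρ]
      fun s => (a * s ^ 2 + b * s + c) * Real.exp (-k) := by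
    filter_upwards [hev] with s hs
    rw [Real.exp_sub, Real.exp_log hs]
    rw [Real.exp_neg]
    field_simp
    simp only [hQ]
    ring
  have hQd : ∀ s : ℝ, HasDerivAt (fun s => (a * s ^ 2 + b * s + c) * Real.exp (-k))
      ((2 * a * s + b) * Real.exp (-k)) s := by
    intro s
    have h1 : HasDerivAt (fun s : ℝ => a * s ^ 2 + b * s + c) (2 * a * s + b) s := by
      have h := (((hasDerivAt_pow 2 s).const_mul a).add ((hasDerivAt_id s).const_mul b)).add_const c
      simp only [id_eq] at h
      refine h.congr_deriv ?_
      push_cast; ring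
    simpa using h1.mul_const (Real.exp (-k))
  have heq1 : deriv (fun s => Real.exp (Real.log (a * s ^ 2 + b * s + c) - k)) =ᶠ[nhds ρ]
      fun s => (2 * a * s + b) * Real.exp (-k) := by
    have := heq0.deriv
    filter_upwards [this] with s hs
    rw [hs, (hQd s).deriv]
  rw [Filter.EventuallyEq.deriv_eq heq1]
  have h2 : HasDerivAt (fun s : ℝ => (2 * a * s + b) * Real.exp (-k)) (2 * a * Real.exp (-k)) ρ := by
    have h := (((hasDerivAt_id ρ).const_mul (2 * a)).add_const b).mul_const (Real.exp (-k))
    simp only [id_eq] at h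
    refine h.congr_deriv ?_
    ring
  rw [h2.deriv]

/-- The function `u(ρ,ζ) = log(aρ² + bρ + c) - 2 log(1 + (a/2)|ζ|²)` solves the continuous
Toda equation `(∂²ₓ + ∂²_y) u = -2 ∂²_ρ (e^u)` where both arguments of the logarithms are
positive. -/
theorem stmt12 (a b c : ℝ) (u : ℝ → ℝ → ℝ → ℝ)
    (hu : ∀ ρ x y, u ρ x y =
      Real.log (a * ρ ^ 2 + b * ρ + c) - 2 * Real.log (1 + a / 2 * (x ^ 2 + y ^ 2))) :
    ∀ ρ x y, 0 < a * ρ ^ 2 + b * ρ + c → 0 < 1 + a / 2 * (x ^ 2 + y ^ 2) →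
      deriv (deriv fun s => u ρ s y) x + deriv (deriv fun t => u ρ x t) y =
        -2 * deriv (deriv fun s => Real.exp (u s x y)) ρ := by
  intro ρ x y hQ hP
  set P : ℝ := 1 + a / 2 * (x ^ 2 + y ^ 2) with hPdef
  -- x direction
  have hx1 : (fun s => u ρ s y) = fun s =>
      Real.log (a * ρ ^ 2 + b * ρ + c) - 2 * Real.log ((1 + a / 2 * y ^ 2) + a / 2 * s ^ 2) := by
    funext s
    rw [hu]
    congr 2
    ring
  have hy1 : (fun t => u ρ x t) = fun t =>
      Real.log (a * ρ ^ 2 + b * ρ + c) - 2 * Real.log ((1 + a / 2 * x ^ 2) + a / 2 * t ^ 2) := by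
    funext t
    rw [hu]
    congr 2
    ring
  have hρ1 : (fun s => Real.exp (u s x y)) = fun s =>
      Real.exp (Real.log (a * s ^ 2 + b * s + c) - 2 * Real.log (1 + a / 2 * (x ^ 2 + y ^ 2))) := by
    funext s
    rw [hu]
  have hx2 : 0 < (1 + a / 2 * y ^ 2) + a / 2 * x ^ 2 := by rw [hPdef] at hP; linarith
  have hy2 : 0 < (1 + a / 2 * x ^ 2) + a / 2 * y ^ 2 := by rw [hPdef] at hP; linarith
  rw [hx1, hy1, hρ1, auxA a _ _ x hx2, auxA a _ _ y hy2, auxB a b c _ ρ hQ]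
  have hPeq : Real.exp (-(2 * Real.log (1 + a / 2 * (x ^ 2 + y ^ 2)))) = (P ^ 2)⁻¹ := by
    rw [hPdef]
    rw [show (2 : ℝ) * Real.log (1 + a / 2 * (x ^ 2 + y ^ 2)) =
        Real.log ((1 + a / 2 * (x ^ 2 + y ^ 2)) ^ 2) by
      rw [Real.log_pow]; push_cast; ring]
    rw [Real.exp_neg, Real.exp_log (by positivity)]
  rw [hPeq]
  have h1 : (1 + a / 2 * y ^ 2) + a / 2 * x ^ 2 = P := by rw [hPdef]; ring
  have h2 : (1 + a / 2 * x ^ 2) + a / 2 * y ^ 2 = P := by rw [hPdef]; ring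
  rw [h1, h2]
  have hPne : P ≠ 0 := ne_of_gt (by rw [hPdef]; exact hP)
  field_simp
  ring
end

section
/- Let a, b, c ∈ ℝ with b ≠ 0, c ≠ 0 and b² − 4ac ≠ 0, and suppose ρ* := −2c/b > 0 and a(ρ*)² + bρ* + c > 0. Then there exists ρ₀ > 0 in a neighborhood of ρ* with the half-open interval between ρ₀ and ρ* contained in {ρ > 0 : aρ² + bρ + c > 0 and (bρ + 2c)/(aρ² + bρ + c) ≥ 0}, and the improper integral ∫ from ρ₀ to ρ* of sqrt((bρ + 2c)/(aρ² + bρ + c)) · (1/ρ) dρ is finite. -/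
/-- The curvature singularity at `ρ* = -2c/b` lies at finite distance: there is `ρ₀ > 0` with
the half-open interval between `ρ₀` and `ρ*` contained in the allowed range, such that the
arclength integrand `√((bρ+2c)/(aρ²+bρ+c))/ρ` is integrable up to `ρ*`. -/
theorem stmt16 (a b c : ℝ) (hb : b ≠ 0) (hc : c ≠ 0) (hdisc : b ^ 2 - 4 * a * c ≠ 0)
    (hρpos : 0 < -2 * c / b)
    (hq : 0 < a * (-2 * c / b) ^ 2 + b * (-2 * c / b) + c) :
    ∃ ρ₀ : ℝ, 0 < ρ₀ ∧ ρ₀ ≠ -2 * c / b ∧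
      (Set.uIcc ρ₀ (-2 * c / b) \ {-2 * c / b} ⊆
        {ρ | 0 < ρ ∧ 0 < a * ρ ^ 2 + b * ρ + c ∧
          0 ≤ (b * ρ + 2 * c) / (a * ρ ^ 2 + b * ρ + c)}) ∧
      MeasureTheory.IntegrableOn
        (fun ρ => Real.sqrt ((b * ρ + 2 * c) / (a * ρ ^ 2 + b * ρ + c)) / ρ)
        (Set.uIcc ρ₀ (-2 * c / b)) := by
  set ρs : ℝ := -2 * c / b with hρs
  have hqcont : Continuous fun ρ : ℝ => a * ρ ^ 2 + b * ρ + c := by continuity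
  have hev : ∀ᶠ x in nhds ρs, 0 < a * x ^ 2 + b * x + c ∧ 0 < x := by
    have h1 : ∀ᶠ x in nhds ρs, 0 < a * x ^ 2 + b * x + c :=
      (hqcont.tendsto ρs).eventually (eventually_gt_nhds hq)
    have h2 : ∀ᶠ x in nhds ρs, 0 < x := eventually_gt_nhds hρpos
    exact h1.and h2
  obtain ⟨ε, hε, hball⟩ := Metric.eventually_nhds_iff.mp hev
  set ρ₀ : ℝ := ρs + (if 0 < b then ε / 2 else -(ε / 2)) with hρ₀
  have hmem : ∀ x ∈ Set.uIcc ρ₀ ρs, dist x ρs < ε := by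
    intro x hx
    have h1 : dist x ρs ≤ dist ρ₀ ρs := Real.dist_right_le_of_mem_uIcc hx
    have h2 : dist ρ₀ ρs < ε := by
      rw [hρ₀, Real.dist_eq]
      split_ifs <;> simp [abs_of_pos, abs_of_neg, hε] <;> linarith
    linarith
  have hbρs : b * ρs + 2 * c = 0 := by
    rw [hρs, mul_div_cancel₀ (-2 * c) hb]; ring
  have hρ₀ne : ρ₀ ≠ ρs := by
    rw [hρ₀]; split_ifs <;> intro h <;> nlinarith
  have hsub : Set.uIcc ρ₀ ρs ⊆ {ρ | 0 < ρ ∧ 0 < a * ρ ^ 2 + b * ρ + c} := by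
    intro x hx
    have := hball (hmem x hx)
    exact ⟨this.2, this.1⟩
  have hρ₀pos : 0 < ρ₀ := (hsub (Set.left_mem_uIcc)).1
  refine ⟨ρ₀, hρ₀pos, hρ₀ne, ?_, ?_⟩
  · intro x hx
    obtain ⟨hx1, hx2⟩ := hx
    obtain ⟨hxpos, hxq⟩ := hsub hx1
    refine ⟨hxpos, hxq, div_nonneg ?_ hxq.le⟩
    -- b*x + 2*c = b*(x - ρs)
    have key : b * x + 2 * c = b * (x - ρs) := by linarith [hbρs]
    rw [key]
    by_cases hbp : 0 < b
    · have : ρs ≤ x := by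
        have h1 : ρ₀ = ρs + ε / 2 := by rw [hρ₀, if_pos hbp]
        have : Set.uIcc ρ₀ ρs = Set.Icc ρs ρ₀ := by
          rw [Set.uIcc_comm, Set.uIcc_of_le (by rw [h1]; linarith)]
        rw [this] at hx1
        exact hx1.1
      exact mul_nonneg hbp.le (by linarith)
    · have hbn : b < 0 := lt_of_le_of_ne (not_lt.mp hbp) hb
      have : x ≤ ρs := by
        have h1 : ρ₀ = ρs - ε / 2 := by rw [hρ₀, if_neg hbp]; ring
        have : Set.uIcc ρ₀ ρs = Set.Icc ρ₀ ρs := by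
          rw [Set.uIcc_of_le (by rw [h1]; linarith)]
        rw [this] at hx1
        exact hx1.2
      nlinarith
  · apply ContinuousOn.integrableOn_compact isCompact_uIcc
    apply ContinuousOn.div
    · apply Real.continuous_sqrt.comp_continuousOn
      apply ContinuousOn.div
      · exact (by continuity : Continuous fun ρ : ℝ => b * ρ + 2 * c).continuousOn
      · exact hqcont.continuousOn
      · intro x hx; exact (hsub hx).2.ne'
    · exact continuousOn_id
    · intro x hx; exact (hsub hx).1.ne'
end
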